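/- Let f : ℝⁿ → ℝ be convex, differentiable, and L-smooth with L > 0, and let x⋆ be a global minimizer of f. Let {x^k}, {y^k}, {t_k}, {f̂^k} be generated by the accelerated proximal bundle method (APBM) with models f̂^k satisfying Assumption 1. Then for every k ≥ 0, f(x^k) − f(x⋆) ≤ 2L‖x⁰ − x⋆‖² / (k + 1)². -/

import Mathlib

open scoped RealInnerProductSpace

section AuxAPBM

variable {E : Type*} [NormedAddCommGroup E] [InnerProductSpace ℝ E]

lemma apbm_key_id (p q r : E) (T : ℝ) :
    ‖T • p + r‖ ^ 2 - ‖T • q + r‖ ^ 2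
      = T * (T - 1) * (‖p‖ ^ 2 - ‖q‖ ^ 2) + T * (‖p + r‖ ^ 2 - ‖q + r‖ ^ 2) := by
  simp only [norm_add_sq_real, real_inner_smul_left, norm_smul, Real.norm_eq_abs, mul_pow,
    sq_abs]
  ring

lemma apbm_comb_id (p q : E) (l : ℝ) :
    ‖p + l • (q - p)‖ ^ 2
      = (1 - l) * ‖p‖ ^ 2 + l * ‖q‖ ^ 2 - l * (1 - l) * ‖q - p‖ ^ 2 := by
  have h : 2 * ⟪p, q - p⟫ = ‖q‖ ^ 2 - ‖p‖ ^ 2 - ‖q - p‖ ^ 2 := by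
    rw [inner_sub_right, norm_sub_sq_real, real_inner_comm q p, real_inner_self_eq_norm_sq]
    ring
  rw [norm_add_sq_real, real_inner_smul_right, norm_smul, Real.norm_eq_abs, mul_pow, sq_abs]
  linear_combination l * h

lemma apbm_limit_trick {C Q : ℝ} (key : ∀ l : ℝ, 0 < l → l ≤ 1 → (1 - l) * Q ≤ C) :
    Q ≤ C := by
  have hC0 : 0 ≤ C := by simpa using key 1 one_pos le_rfl
  by_contra h
  push_neg at h
  have hQpos : 0 < Q := lt_of_le_of_lt hC0 h
  have hd : 0 < Q - C := by linarith
  have hl0 : 0 < (Q - C) / (2 * Q) := by positivity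
  have hl1 : (Q - C) / (2 * Q) ≤ 1 := by
    rw [div_le_one (by positivity)]; linarith
  have hk := key _ hl0 hl1
  have he : (1 - (Q - C) / (2 * Q)) * Q = Q - (Q - C) / 2 := by
    field_simp
  rw [he] at hk
  linarith

lemma apbm_strong_min {L : ℝ} (fh : E → ℝ) (hconv : ConvexOn ℝ Set.univ fh) (yy xm : E)
    (hmin : ∀ z, fh xm + L / 2 * ‖xm - yy‖ ^ 2 ≤ fh z + L / 2 * ‖z - yy‖ ^ 2) (z : E) :
    fh xm + L / 2 * ‖xm - yy‖ ^ 2 + L / 2 * ‖z - xm‖ ^ 2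
      ≤ fh z + L / 2 * ‖z - yy‖ ^ 2 := by
  have key : ∀ l : ℝ, 0 < l → l ≤ 1 →
      (1 - l) * (L / 2 * ‖z - xm‖ ^ 2)
        ≤ (fh z + L / 2 * ‖z - yy‖ ^ 2) - (fh xm + L / 2 * ‖xm - yy‖ ^ 2) := by
    intro l hl0 hl1
    have hpt : xm + l • (z - xm) = (1 - l) • xm + l • z := by
      rw [smul_sub, sub_smul, one_smul]; abel
    have c1 : fh (xm + l • (z - xm)) ≤ (1 - l) * fh xm + l * fh z := by
      rw [hpt]
      exact hconv.2 (Set.mem_univ xm) (Set.mem_univ z) (by linarith) hl0.le (by ring)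
    have c2 : ‖xm + l • (z - xm) - yy‖ ^ 2
        = (1 - l) * ‖xm - yy‖ ^ 2 + l * ‖z - yy‖ ^ 2 - l * (1 - l) * ‖z - xm‖ ^ 2 := by
      have hv : xm + l • (z - xm) - yy = (xm - yy) + l • ((z - yy) - (xm - yy)) := by
        rw [sub_sub_sub_cancel_right]; abel
      rw [hv, apbm_comb_id, sub_sub_sub_cancel_right]
    have c3 := hmin (xm + l • (z - xm))
    rw [c2] at c3
    have h4 : l * ((1 - l) * (L / 2 * ‖z - xm‖ ^ 2))
        ≤ l * ((fh z + L / 2 * ‖z - yy‖ ^ 2) - (fh xm + L / 2 * ‖xm - yy‖ ^ 2)) := by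
      nlinarith [c1, c3]
    exact le_of_mul_le_mul_left h4 hl0
  have := apbm_limit_trick key
  linarith

lemma apbm_descent [CompleteSpace E] {L : ℝ} (hL : 0 < L) (f : E → ℝ)
    (hdiff : Differentiable ℝ f)
    (hsmooth : ∀ u v, ‖gradient f u - gradient f v‖ ≤ L * ‖u - v‖) (v u : E) :
    f u ≤ f v + ⟪gradient f v, u - v⟫ + L / 2 * ‖u - v‖ ^ 2 := by
  set d := u - v with hd
  set φ' : ℝ → ℝ := fun s => ⟪gradient f (v + s • d), d⟫ with hφ'
  have hderiv : ∀ s : ℝ, HasDerivAt (fun s : ℝ => f (v + s • d)) (φ' s) s := by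
    intro s
    have hp : HasDerivAt (fun s : ℝ => v + s • d) d s := by
      simpa using ((hasDerivAt_id s).smul_const d).const_add v
    have hf := (hdiff (v + s • d)).hasFDerivAt
    have hcomp := hf.comp_hasDerivAt s hp
    rw [show φ' s = _ from inner_gradient_left (f := f) (x := v + s • d) (y := d)]
    exact hcomp
  have hgc : Continuous (gradient f) := by
    have hlip : LipschitzWith (Real.toNNReal L) (gradient f) := by
      apply LipschitzWith.of_dist_le_mul
      intro a b
      rw [dist_eq_norm, dist_eq_norm]
      simpa [Real.coe_toNNReal _ hL.le] using hsmooth a b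
    exact hlip.continuous
  have hcont : Continuous φ' :=
    (hgc.comp (by continuity)).inner continuous_const
  have hint : IntervalIntegrable φ' MeasureTheory.volume 0 1 := hcont.intervalIntegrable 0 1
  have hftc : ∫ s in (0:ℝ)..1, φ' s
      = f (v + (1:ℝ) • d) - f (v + (0:ℝ) • d) :=
    intervalIntegral.integral_eq_sub_of_hasDerivAt (fun s _ => hderiv s) hint
  have hb : ∀ s ∈ Set.Icc (0:ℝ) 1, φ' s ≤ φ' 0 + L * ‖d‖ ^ 2 * s := by
    intro s hs
    have h1 : φ' s - φ' 0 = ⟪gradient f (v + s • d) - gradient f (v + (0:ℝ) • d), d⟫ := by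
      simp [hφ', inner_sub_left]
    have h2 := real_inner_le_norm (gradient f (v + s • d) - gradient f (v + (0:ℝ) • d)) d
    have h3 : ‖gradient f (v + s • d) - gradient f (v + (0:ℝ) • d)‖ ≤ L * (s * ‖d‖) := by
      have := hsmooth (v + s • d) (v + (0:ℝ) • d)
      have he : v + s • d - (v + (0:ℝ) • d) = s • d := by
        simp
      rw [he] at this
      simpa [norm_smul, abs_of_nonneg hs.1, mul_assoc] using this
    have hdn : (0:ℝ) ≤ ‖d‖ := norm_nonneg d
    nlinarith [mul_le_mul_of_nonneg_right h3 hdn]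
  have hmono : ∫ s in (0:ℝ)..1, φ' s ≤ ∫ s in (0:ℝ)..1, (φ' 0 + L * ‖d‖ ^ 2 * s) := by
    apply intervalIntegral.integral_mono_on (by norm_num) hint _ hb
    exact (by continuity : Continuous fun s : ℝ => φ' 0 + L * ‖d‖ ^ 2 * s).intervalIntegrable 0 1
  have hval : ∫ s in (0:ℝ)..1, (φ' 0 + L * ‖d‖ ^ 2 * s) = φ' 0 + L * ‖d‖ ^ 2 / 2 := by
    rw [intervalIntegral.integral_add (intervalIntegrable_const)
      ((by continuity : Continuous fun s : ℝ => L * ‖d‖ ^ 2 * s).intervalIntegrable 0 1),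
      intervalIntegral.integral_const, intervalIntegral.integral_const_mul,
      integral_id]
    norm_num [mul_one_div]
  have e1 : v + (1:ℝ) • d = u := by simp [hd]
  have e0 : v + (0:ℝ) • d = v := by simp
  have e2 : φ' 0 = ⟪gradient f v, u - v⟫ := by simp [hφ', hd]
  rw [e1, e0] at hftc
  rw [hval] at hmono
  rw [hftc, e2] at hmono
  linarith

end AuxAPBM

set_option maxHeartbeats 1000000 in
/-- Corollary 1 (APBM convergence rate):
for every `k ≥ 0`, `f(x^k) − f(x⋆) ≤ 2L‖x⁰ − x⋆‖² / (k + 1)²`. -/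
theorem apbm_rate {n : ℕ} {L : ℝ} (hL : 0 < L)
    (f : EuclideanSpace ℝ (Fin n) → ℝ)
    (hconv : ConvexOn ℝ Set.univ f)
    (hdiff : Differentiable ℝ f)
    (hsmooth : ∀ u v, ‖gradient f u - gradient f v‖ ≤ L * ‖u - v‖)
    (xstar : EuclideanSpace ℝ (Fin n)) (hmin : ∀ z, f xstar ≤ f z)
    (x y : ℕ → EuclideanSpace ℝ (Fin n)) (t : ℕ → ℝ)
    (fhat : ℕ → EuclideanSpace ℝ (Fin n) → ℝ)
    (ht1 : t 1 = 1)
    (htrec : ∀ k ≥ 1, t (k + 1) = (1 + Real.sqrt (1 + 4 * t k ^ 2)) / 2)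
    (hy1 : y 1 = x 0)
    (hxmin : ∀ k ≥ 1, ∀ z,
      fhat k (x k) + L / 2 * ‖x k - y k‖ ^ 2 ≤ fhat k z + L / 2 * ‖z - y k‖ ^ 2)
    (hyrec : ∀ k ≥ 1, y (k + 1) = x k + ((t k - 1) / t (k + 1)) • (x k - x (k - 1)))
    (hmodel_convex : ∀ k ≥ 1, ConvexOn ℝ Set.univ (fhat k))
    (hmodel_lower : ∀ k ≥ 1, ∀ z,
      f (y k) + ⟪gradient f (y k), z - y k⟫ ≤ fhat k z)
    (hmodel_upper : ∀ k ≥ 1, ∀ z, fhat k z ≤ f z) :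
    ∀ k : ℕ, f (x k) - f xstar ≤ 2 * L * ‖x 0 - xstar‖ ^ 2 / ((k : ℝ) + 1) ^ 2 := by
  -- key per-step inequality
  have hstar : ∀ k, 1 ≤ k → ∀ z,
      f (x k) + L / 2 * ‖z - x k‖ ^ 2 ≤ f z + L / 2 * ‖z - y k‖ ^ 2 := by
    intro k hk z
    have hd := apbm_descent hL f hdiff hsmooth (y k) (x k)
    have hm := hmodel_lower k hk (x k)
    have hs := apbm_strong_min (fhat k) (hmodel_convex k hk) (y k) (x k) (hxmin k hk) z
    have hu := hmodel_upper k hk z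
    linarith
  -- t k lower bound
  have ht_ge : ∀ k : ℕ, 1 ≤ k → ((k : ℝ) + 1) / 2 ≤ t k := by
    intro k hk
    induction k with
    | zero => omega
    | succ m ih =>
      rcases Nat.eq_or_lt_of_le hk with h1 | h1
      · have hm0 : m = 0 := by omega
        subst hm0
        norm_num [ht1]
      · have hm : 1 ≤ m := by omega
        have ihm := ih hm
        have hmr : (1 : ℝ) ≤ (m : ℝ) := by exact_mod_cast hm
        have htm : 0 ≤ t m := by linarith
        have hsq : 2 * t m ≤ Real.sqrt (1 + 4 * t m ^ 2) := by
          rw [show (1 : ℝ) + 4 * t m ^ 2 = (2 * t m) ^ 2 + 1 by ring]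
          calc 2 * t m ≤ Real.sqrt ((2 * t m) ^ 2) := by
                rw [Real.sqrt_sq (by linarith)]
              _ ≤ Real.sqrt ((2 * t m) ^ 2 + 1) := Real.sqrt_le_sqrt (by linarith)
        rw [htrec m hm]
        push_cast
        linarith
  have ht_one : ∀ k, 1 ≤ k → 1 ≤ t k := by
    intro k hk
    have h := ht_ge k hk
    have : (1 : ℝ) ≤ (k : ℝ) := by exact_mod_cast hk
    linarith
  -- recursion identity
  have htsq : ∀ k, 1 ≤ k → t (k + 1) ^ 2 = t (k + 1) + t k ^ 2 := by
    intro k hk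
    have h0 : (0 : ℝ) ≤ 1 + 4 * t k ^ 2 := by positivity
    rw [htrec k hk]
    linear_combination (Real.sq_sqrt h0) / 4
  -- energy decrease
  have hE : ∀ k, 1 ≤ k →
      t k ^ 2 * (f (x k) - f xstar)
        + L / 2 * ‖t k • x k - (t k - 1) • x (k - 1) - xstar‖ ^ 2
      ≤ L / 2 * ‖x 0 - xstar‖ ^ 2 := by
    intro k hk
    induction k with
    | zero => omega
    | succ m ih =>
      rcases Nat.eq_or_lt_of_le hk with h1 | h1
      · -- base case m + 1 = 1
        have hm0 : m = 0 := by omega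
        subst hm0
        have h := hstar 1 le_rfl xstar
        rw [hy1] at h
        have e1 : ‖xstar - x 1‖ ^ 2 = ‖x 1 - xstar‖ ^ 2 := by rw [norm_sub_rev]
        have e2 : ‖xstar - x 0‖ ^ 2 = ‖x 0 - xstar‖ ^ 2 := by rw [norm_sub_rev]
        simp only [ht1, Nat.sub_self]
        have e3 : (1 : ℝ) • x 1 - ((1 : ℝ) - 1) • x 0 - xstar = x 1 - xstar := by
          rw [one_smul, sub_self, zero_smul]; abel
        rw [e3]
        rw [e1, e2] at h
        nlinarith [h]
      · -- inductive step, m ≥ 1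
        have hm : 1 ≤ m := by omega
        have ihm := ih hm
        simp only [Nat.add_sub_cancel]
        set T := t (m + 1) with hT
        have hT1 : 1 ≤ T := ht_one (m + 1) (by omega)
        have hTT : T * (T - 1) = t m ^ 2 := by
          have := htsq m hm
          linear_combination this
        have h1 := hstar (m + 1) (by omega) (x m)
        have h2 := hstar (m + 1) (by omega) xstar
        have key := apbm_key_id (y (m + 1) - x m) (x (m + 1) - x m) (x m - xstar) T
        have hTne : T ≠ 0 := by intro h; rw [h] at hT1; linarith
        have hy' : y (m + 1) - x m = ((t m - 1) / T) • (x m - x (m - 1)) := by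
          rw [hyrec m hm, add_sub_cancel_left, hT]
        have ea : T • (y (m + 1) - x m) + (x m - xstar)
            = t m • x m - (t m - 1) • x (m - 1) - xstar := by
          rw [hy', smul_smul, mul_div_cancel₀ _ hTne]
          module
        have eb : T • (x (m + 1) - x m) + (x m - xstar)
            = T • x (m + 1) - (T - 1) • x m - xstar := by
          module
        have ec : (y (m + 1) - x m) + (x m - xstar) = y (m + 1) - xstar := by abel
        have ed : (x (m + 1) - x m) + (x m - xstar) = x (m + 1) - xstar := by abel
        rw [ea, eb, ec, ed] at key
        -- norm reversal facts
        have e1 : ‖y (m + 1) - x m‖ ^ 2 = ‖x m - y (m + 1)‖ ^ 2 := by rw [norm_sub_rev]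
        have e2 : ‖x (m + 1) - x m‖ ^ 2 = ‖x m - x (m + 1)‖ ^ 2 := by rw [norm_sub_rev]
        have e3 : ‖y (m + 1) - xstar‖ ^ 2 = ‖xstar - y (m + 1)‖ ^ 2 := by rw [norm_sub_rev]
        have e4 : ‖x (m + 1) - xstar‖ ^ 2 = ‖xstar - x (m + 1)‖ ^ 2 := by rw [norm_sub_rev]
        rw [e1, e2, e3, e4] at key
        -- multiplied inequalities
        have h1' := mul_le_mul_of_nonneg_left h1 (show (0:ℝ) ≤ t m ^ 2 by positivity)
        have h2' := mul_le_mul_of_nonneg_left h2 (show (0:ℝ) ≤ T by linarith)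
        -- key with coefficient rewritten
        have keyL : L / 2 * ‖t m • x m - (t m - 1) • x (m - 1) - xstar‖ ^ 2
            - L / 2 * ‖T • x (m + 1) - (T - 1) • x m - xstar‖ ^ 2
            = L / 2 * (t m ^ 2 * (‖x m - y (m + 1)‖ ^ 2 - ‖x m - x (m + 1)‖ ^ 2)
              + T * (‖xstar - y (m + 1)‖ ^ 2 - ‖xstar - x (m + 1)‖ ^ 2)) := by
          linear_combination (L / 2) * key
            + (L / 2) * (‖x m - y (m + 1)‖ ^ 2 - ‖x m - x (m + 1)‖ ^ 2) * hTT
        have hgoal : T ^ 2 = T + t m ^ 2 := htsq m hm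
        rw [hgoal]
        linarith [h1', h2', keyL, ihm]
  -- conclude
  intro k
  rcases Nat.eq_zero_or_pos k with hk0 | hk1
  · subst hk0
    have hg0 : gradient f xstar = 0 := by
      have hlm : IsLocalMin f xstar := Filter.Eventually.of_forall hmin
      have hf' := hlm.fderiv_eq_zero
      simp [gradient, hf']
    have hd := apbm_descent hL f hdiff hsmooth xstar (x 0)
    rw [hg0] at hd
    simp only [inner_zero_left, add_zero] at hd
    norm_num
    nlinarith [sq_nonneg ‖x 0 - xstar‖, hd]
  · have hEk := hE k hk1
    have hv0 : 0 ≤ f (x k) - f xstar := by linarith [hmin (x k)]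
    have htk := ht_ge k hk1
    have hkr : (0 : ℝ) < (k : ℝ) + 1 := by positivity
    rw [le_div_iff₀ (by positivity : (0:ℝ) < ((k : ℝ) + 1) ^ 2)]
    have hsq : (((k : ℝ) + 1) / 2) ^ 2 ≤ t k ^ 2 := by
      have h0 : (0:ℝ) ≤ ((k : ℝ) + 1) / 2 := by positivity
      exact pow_le_pow_left₀ h0 htk 2
    have h5 := mul_le_mul_of_nonneg_left hsq hv0
    have h6 : t k ^ 2 * (f (x k) - f xstar) ≤ L / 2 * ‖x 0 - xstar‖ ^ 2 := by
      nlinarith [hEk, mul_nonneg (by linarith : (0:ℝ) ≤ L / 2)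
        (sq_nonneg ‖t k • x k - (t k - 1) • x (k - 1) - xstar‖)]
    nlinarith [h5, h6]
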